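/- Let |q|<1, and let B_N denote the N-th denominator convergent of H(a,b,c,d,q), defined by B_0 = 1, B_1 = 1, B_{N+1} = (a+b+dq^N)B_N + (-ab+cq^N)B_{N-1} for N ≥ 1, and let A_N be as in the numerator recurrence with A_0 = 0, A_1 = 1. Then for N ≥ 2, B_N = A_N + (cq - ab) · Σ_{j,l,n≥0} a^j b^{N-2-n-j-l} c^l d^{n-l} q^{n(n+3)/2 + l(l+1)/2} [n+j choose j]_q [N-2-j-l choose n]_q [n choose l]_q. -/

import Mathlib

open Finset

/-- The Gaussian binomial coefficient `[n choose m]_q` as a complex number. -/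
noncomputable def qbinom (q : ℂ) (n m : ℕ) : ℂ :=
  if m ≤ n then
    (∏ k ∈ range n, (1 - q ^ (k + 1))) /
      ((∏ k ∈ range m, (1 - q ^ (k + 1))) * ∏ k ∈ range (n - m), (1 - q ^ (k + 1)))
  else 0

noncomputable def Pq (q : ℂ) (n : ℕ) : ℂ := ∏ k ∈ range n, (1 - q ^ (k + 1))

lemma Pq_zero (q : ℂ) : Pq q 0 = 1 := by simp [Pq]

lemma Pq_succ (q : ℂ) (n : ℕ) : Pq q (n + 1) = Pq q n * (1 - q ^ (n + 1)) := by
  simp [Pq, prod_range_succ]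

lemma Pq_ne_zero {q : ℂ} (hq : ∀ k : ℕ, 1 ≤ k → (1 : ℂ) - q ^ k ≠ 0) (n : ℕ) :
    Pq q n ≠ 0 := by
  induction n with
  | zero => simp [Pq]
  | succ n ih =>
      rw [Pq_succ]
      exact mul_ne_zero ih (hq (n + 1) (Nat.le_add_left 1 n))

lemma qbinom_def (q : ℂ) {n m : ℕ} (h : m ≤ n) :
    qbinom q n m = Pq q n / (Pq q m * Pq q (n - m)) := by
  simp [qbinom, Pq, if_pos h]

lemma qbinom_of_lt (q : ℂ) {n m : ℕ} (h : n < m) : qbinom q n m = 0 := by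
  simp [qbinom, Nat.not_le.2 h]

lemma qbinom_zero {q : ℂ} (hq : ∀ k : ℕ, 1 ≤ k → (1 : ℂ) - q ^ k ≠ 0) (n : ℕ) :
    qbinom q n 0 = 1 := by
  rw [qbinom_def q (Nat.zero_le n), Pq_zero]
  rw [Nat.sub_zero, one_mul, div_self (Pq_ne_zero hq n)]

lemma qbinom_self {q : ℂ} (hq : ∀ k : ℕ, 1 ≤ k → (1 : ℂ) - q ^ k ≠ 0) (n : ℕ) :
    qbinom q n n = 1 := by
  rw [qbinom_def q le_rfl, Nat.sub_self, Pq_zero, mul_one, div_self (Pq_ne_zero hq n)]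

lemma pascal1 {q : ℂ} (hq : ∀ k : ℕ, 1 ≤ k → (1 : ℂ) - q ^ k ≠ 0) (n m : ℕ) :
    qbinom q (n + 1) (m + 1) = qbinom q n m + q ^ (m + 1) * qbinom q n (m + 1) := by
  rcases lt_trichotomy n m with h | rfl | h
  · rw [qbinom_of_lt q (by omega), qbinom_of_lt q (by omega), qbinom_of_lt q (by omega)]
    ring
  · rw [qbinom_self hq, qbinom_self hq, qbinom_of_lt q (by omega)]; ring
  · obtain ⟨s, rfl⟩ : ∃ s, n = m + 1 + s := ⟨n - m - 1, by omega⟩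
    rw [qbinom_def q (by omega), qbinom_def q (by omega), qbinom_def q (by omega)]
    rw [show m + 1 + s + 1 - (m + 1) = s + 1 from by omega,
      show m + 1 + s - m = s + 1 from by omega,
      show m + 1 + s - (m + 1) = s from by omega]
    rw [Pq_succ q (m + 1 + s), Pq_succ q m, Pq_succ q s]
    have h1 := Pq_ne_zero hq (m + 1 + s)
    have h2 := Pq_ne_zero hq m
    have h3 := Pq_ne_zero hq s
    have h4 := hq (m + 1) (by omega)
    have h5 := hq (s + 1) (by omega)
    field_simp
    ring_nf

lemma pascal2 {q : ℂ} (hq : ∀ k : ℕ, 1 ≤ k → (1 : ℂ) - q ^ k ≠ 0) (n m : ℕ) :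
    qbinom q (n + 1) (m + 1) = q ^ (n - m) * qbinom q n m + qbinom q n (m + 1) := by
  rcases lt_trichotomy n m with h | rfl | h
  · rw [qbinom_of_lt q (by omega), qbinom_of_lt q (by omega), qbinom_of_lt q (by omega)]
    ring
  · rw [qbinom_self hq, qbinom_self hq, qbinom_of_lt q (by omega), Nat.sub_self]; ring
  · obtain ⟨s, rfl⟩ : ∃ s, n = m + 1 + s := ⟨n - m - 1, by omega⟩
    rw [qbinom_def q (by omega), qbinom_def q (by omega), qbinom_def q (by omega)]
    rw [show m + 1 + s + 1 - (m + 1) = s + 1 from by omega,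
      show m + 1 + s - m = s + 1 from by omega,
      show m + 1 + s - (m + 1) = s from by omega]
    rw [Pq_succ q (m + 1 + s), Pq_succ q m, Pq_succ q s]
    have h1 := Pq_ne_zero hq (m + 1 + s)
    have h2 := Pq_ne_zero hq m
    have h3 := Pq_ne_zero hq s
    have h4 := hq (m + 1) (by omega)
    have h5 := hq (s + 1) (by omega)
    field_simp
    ring_nf


lemma Edvd (n : ℕ) : n * (n + 3) % 2 = 0 := by
  have h1 : n * (n + 3) = n * (n + 1) + 2 * n := by ring
  have h2 : n * (n + 1) % 2 = 0 := Nat.even_iff.1 (Nat.even_mul_succ_self n)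
  omega

lemma E1 (n : ℕ) : (n + 1) * ((n + 1) + 3) / 2 = n * (n + 3) / 2 + (n + 2) := by
  have ha : (n + 1) * ((n + 1) + 3) = n * (n + 3) + 2 * (n + 2) := by ring
  have hb := Edvd n
  omega

lemma Ldvd (l : ℕ) : l * (l + 1) % 2 = 0 := Nat.even_iff.1 (Nat.even_mul_succ_self l)

lemma E2 (l : ℕ) : (l + 1) * ((l + 1) + 1) / 2 = l * (l + 1) / 2 + (l + 1) := by
  have ha : (l + 1) * ((l + 1) + 1) = l * (l + 1) + 2 * (l + 1) := by ring
  have hb := Ldvd l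
  omega

noncomputable def trm (q a b c d : ℂ) (m n j l : ℕ) : ℂ :=
  a ^ j * b ^ (m - n - j - l) * c ^ l * d ^ (n - l) *
    q ^ (n * (n + 3) / 2 + l * (l + 1) / 2) *
    qbinom q (n + j) j * qbinom q (m - j - l) n * qbinom q n l
section TrmRec

variable {q : ℂ} (a b c d : ℂ)

set_option maxHeartbeats 2000000 in
lemma trm_rec (hq : ∀ k : ℕ, 1 ≤ k → (1 : ℂ) - q ^ k ≠ 0) (m n j l : ℕ)
    (h : n + j + l ≤ m + 2) :
    trm q a b c d (m + 2) n j l =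
      (if 1 ≤ j then a * trm q a b c d (m + 1) n (j - 1) l else 0)
    + (if n + j + l ≤ m + 1 then b * trm q a b c d (m + 1) n j l else 0)
    + (if 1 ≤ n then d * q ^ (m + 3) * trm q a b c d (m + 1) (n - 1) j l else 0)
    + (if 1 ≤ n ∧ 1 ≤ l then c * q ^ (m + 3) * trm q a b c d m (n - 1) j (l - 1) else 0)
    + (if 1 ≤ j ∧ n + j + l ≤ m + 1 then -(a * b) * trm q a b c d m n (j - 1) l else 0) := by
  by_cases hnl : n < l
  · have z : qbinom q n l = 0 := qbinom_of_lt q hnl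
    rcases n with _ | n'
    · simp [trm, z]
    · have z2 : qbinom q n' l = 0 := qbinom_of_lt q (by omega)
      have z3 : qbinom q n' (l - 1) = 0 := qbinom_of_lt q (by omega)
      simp [trm, z, z2, z3, Nat.add_sub_cancel]
  · push_neg at hnl
    rcases n with _ | n'
    · obtain rfl : l = 0 := by omega
      have hv : ∀ (M k : ℕ), trm q a b c d M 0 k 0 = a ^ k * b ^ (M - k) := by
        intro M k
        simp [trm, qbinom_self hq, qbinom_zero hq]
      simp only [hv]
      rcases j with _ | j'
      · simp only [Nat.zero_add, Nat.add_zero, pow_zero, one_mul]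
        split_ifs <;> try (exfalso; omega)
        simp only [Nat.sub_zero]
        ring
      · simp only [Nat.add_sub_cancel]
        by_cases hj : j' + 1 ≤ m + 1
        · split_ifs <;> try (exfalso; omega)
          rw [show m + 2 - (j' + 1) = m - j' + 1 by omega,
            show m + 1 - j' = m - j' + 1 by omega,
            show m + 1 - (j' + 1) = m - j' by omega]
          ring
        · split_ifs <;> try (exfalso; omega)
          rw [show m + 2 - (j' + 1) = 0 by omega, show m + 1 - j' = 0 by omega]
          ring
    · obtain ⟨t, ht⟩ : ∃ t, m + 1 = n' + j + l + t := ⟨m + 1 - (n' + j + l), by omega⟩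
      rcases l with _ | l'
      · -- l = 0
        rcases j with _ | j' <;> rcases t with _ | t'
        · -- A1: j = 0, t = 0 : n' = m + 1
          obtain rfl : n' = m + 1 := by omega
          simp only [trm, Nat.add_sub_cancel, Nat.sub_zero, Nat.add_zero, Nat.zero_mul,
            Nat.zero_div]
          split_ifs <;> try (exfalso; omega)
          rw [show m + 2 - (m + 1 + 1) = 0 by omega, show m + 1 - (m + 1) = 0 by omega,
            show m + 2 = m + 1 + 1 from rfl]
          try simp only [qbinom_self hq, qbinom_zero hq]
          rw [E1 (m + 1)]
          ring
        · -- A2: j = 0, t = t'+1 : m = n' + t'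
          obtain rfl : m = n' + t' := by omega
          simp only [trm, Nat.add_sub_cancel, Nat.sub_zero, Nat.add_zero, Nat.zero_mul,
            Nat.zero_div]
          split_ifs <;> try (exfalso; omega)
          have P1 := pascal2 hq (n' + t' + 1) n'
          rw [show n' + t' + 1 - n' = t' + 1 by omega] at P1
          rw [show n' + t' + 2 - (n' + 1) = t' + 1 by omega,
            show n' + t' + 1 - (n' + 1) = t' by omega,
            show n' + t' + 1 - n' = t' + 1 by omega,
            show n' + t' + 2 = n' + t' + 1 + 1 from rfl, P1]
          try simp only [qbinom_self hq, qbinom_zero hq]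
          rw [E1 n']
          ring
        · -- A3: j = j'+1, t = 0 : m = n' + j'
          obtain rfl : m = n' + j' := by omega
          simp only [trm, Nat.add_sub_cancel, Nat.sub_zero, Nat.add_zero, Nat.zero_mul,
            Nat.zero_div]
          split_ifs <;> try (exfalso; omega)
          have P2 := pascal1 hq (n' + j' + 1) j'
          rw [show n' + j' + 2 - (n' + 1) - (j' + 1) = 0 by omega,
            show n' + j' + 1 - (n' + 1) - j' = 0 by omega,
            show n' + j' + 1 - n' - (j' + 1) = 0 by omega,
            show n' + 1 + (j' + 1) = n' + j' + 1 + 1 by omega,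
            show n' + 1 + j' = n' + j' + 1 by omega,
            show n' + (j' + 1) = n' + j' + 1 by omega,
            show n' + j' + 2 - (j' + 1) = n' + 1 by omega,
            show n' + j' + 1 - j' = n' + 1 by omega,
            show n' + j' + 1 - (j' + 1) = n' by omega, P2]
          try simp only [qbinom_self hq, qbinom_zero hq]
          rw [E1 n']
          ring
        · -- A4: j = j'+1, t = t'+1 : m = n' + j' + t' + 1
          obtain rfl : m = n' + j' + t' + 1 := by omega
          simp only [trm, Nat.add_sub_cancel, Nat.sub_zero, Nat.add_zero, Nat.zero_mul,
            Nat.zero_div]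
          split_ifs <;> try (exfalso; omega)
          have P1 := pascal2 hq (n' + t' + 1) n'
          rw [show n' + t' + 1 - n' = t' + 1 by omega] at P1
          have P2 := pascal1 hq (n' + j' + 1) j'
          rw [show n' + j' + t' + 1 + 2 - (n' + 1) - (j' + 1) = t' + 1 by omega,
            show n' + j' + t' + 1 + 1 - (n' + 1) - j' = t' + 1 by omega,
            show n' + j' + t' + 1 + 1 - (n' + 1) - (j' + 1) = t' by omega,
            show n' + j' + t' + 1 + 1 - n' - (j' + 1) = t' + 1 by omega,
            show n' + j' + t' + 1 - (n' + 1) - j' = t' by omega,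
            show n' + 1 + (j' + 1) = n' + j' + 1 + 1 by omega,
            show n' + 1 + j' = n' + j' + 1 by omega,
            show n' + (j' + 1) = n' + j' + 1 by omega,
            show n' + j' + t' + 1 + 2 - (j' + 1) = n' + t' + 1 + 1 by omega,
            show n' + j' + t' + 1 + 1 - j' = n' + t' + 1 + 1 by omega,
            show n' + j' + t' + 1 + 1 - (j' + 1) = n' + t' + 1 by omega,
            show n' + j' + t' + 1 - j' = n' + t' + 1 by omega,
            P1, P2]
          try simp only [qbinom_self hq, qbinom_zero hq]
          rw [E1 n']
          ring
      · rcases Nat.lt_or_ge l' n' with hw | hw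
        · -- B: n' = l' + 1 + w
          obtain ⟨w, rfl⟩ : ∃ w, n' = l' + 1 + w := ⟨n' - (l' + 1), by omega⟩
          rcases j with _ | j' <;> rcases t with _ | t'
          · -- B1: j = 0, t = 0 : m = l'+1+w+l'
            obtain rfl : m = l' + 1 + w + l' := by omega
            simp only [trm, Nat.add_sub_cancel, Nat.sub_zero, Nat.add_zero, Nat.zero_mul,
              Nat.zero_div]
            split_ifs <;> try (exfalso; omega)
            have P3 := pascal1 hq (l' + 1 + w) l'
            rw [show l' + 1 + w + l' + 2 - (l' + 1 + w + 1) - (l' + 1) = 0 by omega,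
              show l' + 1 + w + l' + 1 - (l' + 1 + w) - (l' + 1) = 0 by omega,
              show l' + 1 + w + l' - (l' + 1 + w) - l' = 0 by omega,
              show l' + 1 + w + 1 - (l' + 1) = w + 1 by omega,
              show l' + 1 + w - (l' + 1) = w by omega,
              show l' + 1 + w - l' = w + 1 by omega,
              show l' + 1 + w + l' + 2 - (l' + 1) = l' + 1 + w + 1 by omega,
              show l' + 1 + w + l' + 1 - (l' + 1) = l' + 1 + w by omega,
              P3]
            try simp only [qbinom_self hq, qbinom_zero hq]
            rw [E1 (l' + 1 + w), E2 l']
            ring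
          · -- B2: j = 0, t = t'+1 : m = l'+1+w+l'+t'+1
            obtain rfl : m = l' + 1 + w + l' + t' + 1 := by omega
            simp only [trm, Nat.add_sub_cancel, Nat.sub_zero, Nat.add_zero, Nat.zero_mul,
              Nat.zero_div]
            split_ifs <;> try (exfalso; omega)
            have P1 := pascal2 hq (l' + 1 + w + t' + 1) (l' + 1 + w)
            rw [show l' + 1 + w + t' + 1 - (l' + 1 + w) = t' + 1 by omega] at P1
            have P3 := pascal1 hq (l' + 1 + w) l'
            rw [show l' + 1 + w + l' + t' + 1 + 2 - (l' + 1 + w + 1) - (l' + 1) = t' + 1 by omega,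
              show l' + 1 + w + l' + t' + 1 + 1 - (l' + 1 + w + 1) - (l' + 1) = t' by omega,
              show l' + 1 + w + l' + t' + 1 + 1 - (l' + 1 + w) - (l' + 1) = t' + 1 by omega,
              show l' + 1 + w + l' + t' + 1 - (l' + 1 + w) - l' = t' + 1 by omega,
              show l' + 1 + w + 1 - (l' + 1) = w + 1 by omega,
              show l' + 1 + w - (l' + 1) = w by omega,
              show l' + 1 + w - l' = w + 1 by omega,
              show l' + 1 + w + l' + t' + 1 + 2 - (l' + 1) = l' + 1 + w + t' + 1 + 1 by omega,
              show l' + 1 + w + l' + t' + 1 + 1 - (l' + 1) = l' + 1 + w + t' + 1 by omega,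
              show l' + 1 + w + l' + t' + 1 - l' = l' + 1 + w + t' + 1 by omega,
              P1, P3]
            try simp only [qbinom_self hq, qbinom_zero hq]
            rw [E1 (l' + 1 + w), E2 l']
            ring
          · -- B3: j = j'+1, t = 0 : m = l'+1+w+j'+l'+1
            obtain rfl : m = l' + 1 + w + j' + l' + 1 := by omega
            simp only [trm, Nat.add_sub_cancel, Nat.sub_zero, Nat.add_zero, Nat.zero_mul,
              Nat.zero_div]
            split_ifs <;> try (exfalso; omega)
            have P2 := pascal1 hq (l' + 1 + w + 1 + j') j'
            have P3 := pascal1 hq (l' + 1 + w) l'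
            rw [show l' + 1 + w + j' + l' + 1 + 2 - (l' + 1 + w + 1) - (j' + 1) - (l' + 1) = 0 by omega,
              show l' + 1 + w + j' + l' + 1 + 1 - (l' + 1 + w + 1) - j' - (l' + 1) = 0 by omega,
              show l' + 1 + w + j' + l' + 1 + 1 - (l' + 1 + w) - (j' + 1) - (l' + 1) = 0 by omega,
              show l' + 1 + w + j' + l' + 1 - (l' + 1 + w) - (j' + 1) - l' = 0 by omega,
              show l' + 1 + w + 1 - (l' + 1) = w + 1 by omega,
              show l' + 1 + w - (l' + 1) = w by omega,
              show l' + 1 + w - l' = w + 1 by omega,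
              show l' + 1 + w + 1 + (j' + 1) = l' + 1 + w + 1 + j' + 1 by omega,
              show l' + 1 + w + (j' + 1) = l' + 1 + w + 1 + j' by omega,
              show l' + 1 + w + j' + l' + 1 + 2 - (j' + 1) - (l' + 1) = l' + 1 + w + 1 by omega,
              show l' + 1 + w + j' + l' + 1 + 1 - j' - (l' + 1) = l' + 1 + w + 1 by omega,
              show l' + 1 + w + j' + l' + 1 + 1 - (j' + 1) - (l' + 1) = l' + 1 + w by omega,
              show l' + 1 + w + j' + l' + 1 - (j' + 1) - l' = l' + 1 + w by omega,
              P2, P3]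
            try simp only [qbinom_self hq, qbinom_zero hq]
            rw [E1 (l' + 1 + w), E2 l']
            ring
          · -- B4: j = j'+1, t = t'+1 : m = l'+1+w+j'+l'+t'+2
            obtain rfl : m = l' + 1 + w + j' + l' + t' + 2 := by omega
            simp only [trm, Nat.add_sub_cancel, Nat.sub_zero, Nat.add_zero, Nat.zero_mul,
              Nat.zero_div]
            split_ifs <;> try (exfalso; omega)
            have P1 := pascal2 hq (l' + 1 + w + t' + 1) (l' + 1 + w)
            rw [show l' + 1 + w + t' + 1 - (l' + 1 + w) = t' + 1 by omega] at P1
            have P2 := pascal1 hq (l' + 1 + w + 1 + j') j'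
            have P3 := pascal1 hq (l' + 1 + w) l'
            rw [show l' + 1 + w + j' + l' + t' + 2 + 2 - (l' + 1 + w + 1) - (j' + 1) - (l' + 1) = t' + 1 by omega,
              show l' + 1 + w + j' + l' + t' + 2 + 1 - (l' + 1 + w + 1) - j' - (l' + 1) = t' + 1 by omega,
              show l' + 1 + w + j' + l' + t' + 2 + 1 - (l' + 1 + w + 1) - (j' + 1) - (l' + 1) = t' by omega,
              show l' + 1 + w + j' + l' + t' + 2 + 1 - (l' + 1 + w) - (j' + 1) - (l' + 1) = t' + 1 by omega,
              show l' + 1 + w + j' + l' + t' + 2 - (l' + 1 + w) - (j' + 1) - l' = t' + 1 by omega,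
              show l' + 1 + w + j' + l' + t' + 2 - (l' + 1 + w + 1) - j' - (l' + 1) = t' by omega,
              show l' + 1 + w + 1 - (l' + 1) = w + 1 by omega,
              show l' + 1 + w - (l' + 1) = w by omega,
              show l' + 1 + w - l' = w + 1 by omega,
              show l' + 1 + w + 1 + (j' + 1) = l' + 1 + w + 1 + j' + 1 by omega,
              show l' + 1 + w + (j' + 1) = l' + 1 + w + 1 + j' by omega,
              show l' + 1 + w + j' + l' + t' + 2 + 2 - (j' + 1) - (l' + 1) = l' + 1 + w + t' + 1 + 1 by omega,
              show l' + 1 + w + j' + l' + t' + 2 + 1 - j' - (l' + 1) = l' + 1 + w + t' + 1 + 1 by omega,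
              show l' + 1 + w + j' + l' + t' + 2 + 1 - (j' + 1) - (l' + 1) = l' + 1 + w + t' + 1 by omega,
              show l' + 1 + w + j' + l' + t' + 2 - (j' + 1) - l' = l' + 1 + w + t' + 1 by omega,
              show l' + 1 + w + j' + l' + t' + 2 - j' - (l' + 1) = l' + 1 + w + t' + 1 by omega,
              P1, P2, P3]
            try simp only [qbinom_self hq, qbinom_zero hq]
            rw [E1 (l' + 1 + w), E2 l']
            ring
        · -- C: n' = l'
          obtain rfl : n' = l' := by omega
          have z : qbinom q n' (n' + 1) = 0 := qbinom_of_lt q (by omega)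
          rcases j with _ | j' <;> rcases t with _ | t'
          · -- C1: m = n' + n'
            obtain rfl : m = n' + n' := by omega
            simp only [trm, Nat.add_sub_cancel, Nat.sub_zero, Nat.add_zero, Nat.zero_mul,
              Nat.zero_div]
            split_ifs <;> try (exfalso; omega)
            simp only [z, mul_zero, zero_mul, add_zero, zero_add]
            rw [show n' + n' + 2 - (n' + 1) - (n' + 1) = 0 by omega,
              show n' + 1 - (n' + 1) = 0 by omega,
              show n' - n' = 0 by omega,
              show n' + n' + 2 - (n' + 1) = n' + 1 by omega]
            try simp only [qbinom_self hq, qbinom_zero hq]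
            rw [E1 n', E2 n']
            ring
          · -- C2: m = n' + n' + t' + 1
            obtain rfl : m = n' + n' + t' + 1 := by omega
            simp only [trm, Nat.add_sub_cancel, Nat.sub_zero, Nat.add_zero, Nat.zero_mul,
              Nat.zero_div]
            split_ifs <;> try (exfalso; omega)
            simp only [z, mul_zero, zero_mul, add_zero, zero_add]
            have P1 := pascal2 hq (n' + t' + 1) n'
            rw [show n' + t' + 1 - n' = t' + 1 by omega] at P1
            rw [show n' + n' + t' + 1 + 2 - (n' + 1) - (n' + 1) = t' + 1 by omega,
              show n' + n' + t' + 1 + 1 - (n' + 1) - (n' + 1) = t' by omega,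
              show n' + n' + t' + 1 - n' - n' = t' + 1 by omega,
              show n' + 1 - (n' + 1) = 0 by omega,
              show n' - n' = 0 by omega,
              show n' + n' + t' + 1 + 2 - (n' + 1) = n' + t' + 1 + 1 by omega,
              show n' + n' + t' + 1 + 1 - (n' + 1) = n' + t' + 1 by omega,
              show n' + n' + t' + 1 - n' = n' + t' + 1 by omega,
              P1]
            try simp only [qbinom_self hq, qbinom_zero hq]
            rw [E1 n', E2 n']
            ring
          · -- C3: m = n' + j' + n' + 1
            obtain rfl : m = n' + j' + n' + 1 := by omega
            simp only [trm, Nat.add_sub_cancel, Nat.sub_zero, Nat.add_zero, Nat.zero_mul,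
              Nat.zero_div]
            split_ifs <;> try (exfalso; omega)
            simp only [z, mul_zero, zero_mul, add_zero, zero_add]
            have P2 := pascal1 hq (n' + j' + 1) j'
            rw [show n' + j' + n' + 1 + 2 - (n' + 1) - (j' + 1) - (n' + 1) = 0 by omega,
              show n' + j' + n' + 1 + 1 - (n' + 1) - j' - (n' + 1) = 0 by omega,
              show n' + j' + n' + 1 - n' - (j' + 1) - n' = 0 by omega,
              show n' + 1 - (n' + 1) = 0 by omega,
              show n' - n' = 0 by omega,
              show n' + 1 + (j' + 1) = n' + j' + 1 + 1 by omega,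
              show n' + 1 + j' = n' + j' + 1 by omega,
              show n' + (j' + 1) = n' + j' + 1 by omega,
              show n' + j' + n' + 1 + 2 - (j' + 1) - (n' + 1) = n' + 1 by omega,
              show n' + j' + n' + 1 + 1 - j' - (n' + 1) = n' + 1 by omega,
              show n' + j' + n' + 1 - (j' + 1) - n' = n' by omega,
              P2]
            try simp only [qbinom_self hq, qbinom_zero hq]
            rw [E1 n', E2 n']
            ring
          · -- C4: m = n' + j' + n' + t' + 2
            obtain rfl : m = n' + j' + n' + t' + 2 := by omega
            simp only [trm, Nat.add_sub_cancel, Nat.sub_zero, Nat.add_zero, Nat.zero_mul,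
              Nat.zero_div]
            split_ifs <;> try (exfalso; omega)
            simp only [z, mul_zero, zero_mul, add_zero, zero_add]
            have P1 := pascal2 hq (n' + t' + 1) n'
            rw [show n' + t' + 1 - n' = t' + 1 by omega] at P1
            have P2 := pascal1 hq (n' + j' + 1) j'
            rw [show n' + j' + n' + t' + 2 + 2 - (n' + 1) - (j' + 1) - (n' + 1) = t' + 1 by omega,
              show n' + j' + n' + t' + 2 + 1 - (n' + 1) - j' - (n' + 1) = t' + 1 by omega,
              show n' + j' + n' + t' + 2 + 1 - (n' + 1) - (j' + 1) - (n' + 1) = t' by omega,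
              show n' + j' + n' + t' + 2 - n' - (j' + 1) - n' = t' + 1 by omega,
              show n' + j' + n' + t' + 2 - (n' + 1) - j' - (n' + 1) = t' by omega,
              show n' + 1 - (n' + 1) = 0 by omega,
              show n' - n' = 0 by omega,
              show n' + 1 + (j' + 1) = n' + j' + 1 + 1 by omega,
              show n' + 1 + j' = n' + j' + 1 by omega,
              show n' + (j' + 1) = n' + j' + 1 by omega,
              show n' + j' + n' + t' + 2 + 2 - (j' + 1) - (n' + 1) = n' + t' + 1 + 1 by omega,
              show n' + j' + n' + t' + 2 + 1 - j' - (n' + 1) = n' + t' + 1 + 1 by omega,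
              show n' + j' + n' + t' + 2 + 1 - (j' + 1) - (n' + 1) = n' + t' + 1 by omega,
              show n' + j' + n' + t' + 2 - (j' + 1) - n' = n' + t' + 1 by omega,
              show n' + j' + n' + t' + 2 - j' - (n' + 1) = n' + t' + 1 by omega,
              P1, P2]
            try simp only [qbinom_self hq, qbinom_zero hq]
            rw [E1 n', E2 n']
            ring

end TrmRec
noncomputable def Gs (q a b c d : ℂ) (m : ℕ) : ℂ :=
  ∑ n ∈ range (m + 1), ∑ j ∈ range (m + 1 - n), ∑ l ∈ range (m + 1 - n - j),
    trm q a b c d m n j l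

lemma sum_trim (f : ℕ → ℂ) {K L : ℕ} (h : K ≤ L) :
    (∑ i ∈ range L, if i < K then f i else 0) = ∑ i ∈ range K, f i := by
  rw [← Finset.sum_subset (Finset.range_subset_range.2 h)
    (fun x hx hnx => if_neg (by simpa using hnx))]
  exact Finset.sum_congr rfl fun i hi => if_pos (Finset.mem_range.1 hi)

section Sums

variable (q a b c d : ℂ) (m : ℕ)

lemma SL1 :
    (∑ n ∈ range (m + 3), ∑ j ∈ range (m + 3 - n), ∑ l ∈ range (m + 3 - n - j),
      if 1 ≤ j then a * trm q a b c d (m + 1) n (j - 1) l else 0)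
    = a * Gs q a b c d (m + 1) := by
  rw [Gs, Finset.mul_sum]
  rw [show m + 3 = (m + 2) + 1 from rfl, Finset.sum_range_succ]
  rw [show m + 2 + 1 - (m + 2) = 1 by omega]
  simp only [Finset.sum_range_one, if_neg (by omega : ¬ (1:ℕ) ≤ 0), Finset.sum_const_zero,
    add_zero]
  refine Finset.sum_congr rfl fun n hn => ?_
  rw [Finset.mem_range] at hn
  rw [Finset.mul_sum]
  rw [show m + 2 + 1 - n = (m + 1 + 1 - n) + 1 by omega, Finset.sum_range_succ']
  simp only [if_neg (by omega : ¬ (1:ℕ) ≤ 0), Finset.sum_const_zero, add_zero,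
    Nat.add_sub_cancel]
  refine Finset.sum_congr rfl fun j hj => ?_
  rw [Finset.mem_range] at hj
  rw [Finset.mul_sum]
  rw [show m + 1 + 1 - n + 1 - (j + 1) = m + 1 + 1 - n - j by omega]
  refine Finset.sum_congr rfl fun l hl => ?_
  rw [if_pos (by omega)]

lemma SL2 :
    (∑ n ∈ range (m + 3), ∑ j ∈ range (m + 3 - n), ∑ l ∈ range (m + 3 - n - j),
      if n + j + l ≤ m + 1 then b * trm q a b c d (m + 1) n j l else 0)
    = b * Gs q a b c d (m + 1) := by
  have step1 : ∀ n ∈ range (m + 3), ∀ j ∈ range (m + 3 - n),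
      (∑ l ∈ range (m + 3 - n - j), if n + j + l ≤ m + 1 then b * trm q a b c d (m + 1) n j l else 0)
      = ∑ l ∈ range (m + 2 - n - j), b * trm q a b c d (m + 1) n j l := by
    intro n _ j _
    rw [Finset.sum_congr rfl fun l _ =>
      if_congr (show (n + j + l ≤ m + 1) ↔ l < m + 2 - n - j by omega) rfl rfl]
    exact sum_trim _ (by omega)
  rw [Finset.sum_congr rfl fun n hn => Finset.sum_congr rfl fun j hj => step1 n hn j hj]
  rw [Gs, Finset.mul_sum]
  rw [show m + 3 = (m + 2) + 1 from rfl, Finset.sum_range_succ]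
  have hlast : (∑ j ∈ range (m + 2 + 1 - (m + 2)), ∑ l ∈ range (m + 2 - (m + 2) - j),
      b * trm q a b c d (m + 1) (m + 2) j l) = 0 := by
    rw [show m + 2 + 1 - (m + 2) = 1 by omega, show m + 2 - (m + 2) = 0 by omega]
    simp
  rw [hlast, add_zero]
  refine Finset.sum_congr rfl fun n hn => ?_
  rw [Finset.mem_range] at hn
  rw [Finset.mul_sum]
  rw [show m + 2 + 1 - n = (m + 1 + 1 - n) + 1 by omega, Finset.sum_range_succ]
  have hlast2 : (∑ l ∈ range (m + 2 - n - (m + 1 + 1 - n)),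
      b * trm q a b c d (m + 1) n (m + 1 + 1 - n) l) = 0 := by
    rw [show m + 2 - n - (m + 1 + 1 - n) = 0 by omega]
    simp
  rw [hlast2, add_zero]
  refine Finset.sum_congr rfl fun j hj => ?_
  rw [Finset.mem_range] at hj
  rw [Finset.mul_sum, show m + 2 - n - j = m + 1 + 1 - n - j by omega]

lemma SL3 :
    (∑ n ∈ range (m + 3), ∑ j ∈ range (m + 3 - n), ∑ l ∈ range (m + 3 - n - j),
      if 1 ≤ n then d * q ^ (m + 3) * trm q a b c d (m + 1) (n - 1) j l else 0)
    = d * q ^ (m + 3) * Gs q a b c d (m + 1) := by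
  rw [Gs, Finset.mul_sum]
  rw [show m + 3 = (m + 2) + 1 from rfl, Finset.sum_range_succ']
  simp only [if_neg (by omega : ¬ (1:ℕ) ≤ 0), Finset.sum_const_zero, add_zero,
    Nat.add_sub_cancel]
  refine Finset.sum_congr rfl fun n hn => ?_
  rw [Finset.mem_range] at hn
  rw [Finset.mul_sum]
  rw [show m + 2 + 1 - (n + 1) = m + 1 + 1 - n by omega]
  refine Finset.sum_congr rfl fun j hj => ?_
  rw [Finset.mul_sum]
  refine Finset.sum_congr rfl fun l hl => ?_
  rw [if_pos (by omega)]

lemma SL4 :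
    (∑ n ∈ range (m + 3), ∑ j ∈ range (m + 3 - n), ∑ l ∈ range (m + 3 - n - j),
      if 1 ≤ n ∧ 1 ≤ l then c * q ^ (m + 3) * trm q a b c d m (n - 1) j (l - 1) else 0)
    = c * q ^ (m + 3) * Gs q a b c d m := by
  rw [Gs, Finset.mul_sum]
  rw [show m + 3 = (m + 2) + 1 from rfl, Finset.sum_range_succ']
  have h0 : ∀ X : ℕ, (∑ j ∈ range X, ∑ l ∈ range (m + 2 + 1 - 0 - j),
      if 1 ≤ 0 ∧ 1 ≤ l then c * q ^ (m + 2 + 1) * trm q a b c d m (0 - 1) j (l - 1) else 0) = 0 :=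
    fun X => Finset.sum_eq_zero fun j _ => Finset.sum_eq_zero fun l _ => if_neg (by omega)
  rw [h0, add_zero]
  rw [show m + 2 = (m + 1) + 1 from rfl, Finset.sum_range_succ]
  have h1 : ∀ X : ℕ, (∑ j ∈ range X, ∑ l ∈ range (m + 1 + 1 + 1 - (m + 1 + 1) - j),
      if 1 ≤ m + 1 + 1 ∧ 1 ≤ l then
        c * q ^ (m + 1 + 1 + 1) * trm q a b c d m (m + 1 + 1 - 1) j (l - 1) else 0) = 0 := by
    intro X
    apply Finset.sum_eq_zero; intro j hj
    apply Finset.sum_eq_zero; intro l hl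
    rw [Finset.mem_range] at hl
    rw [if_neg (by omega)]
  rw [h1, add_zero]
  refine Finset.sum_congr rfl fun n hn => ?_
  rw [Finset.mem_range] at hn
  rw [Finset.mul_sum]
  rw [show m + 1 + 1 + 1 - (n + 1) = (m + 1 - n) + 1 by omega, Finset.sum_range_succ]
  have h2 : (∑ l ∈ range (m + 1 - n + 1 - (m + 1 - n)),
      if 1 ≤ n + 1 ∧ 1 ≤ l then
        c * q ^ (m + 1 + 1 + 1) * trm q a b c d m (n + 1 - 1) (m + 1 - n) (l - 1) else 0) = 0 := by
    apply Finset.sum_eq_zero; intro l hl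
    rw [Finset.mem_range] at hl
    rw [if_neg (by omega)]
  rw [h2, add_zero]
  refine Finset.sum_congr rfl fun j hj => ?_
  rw [Finset.mem_range] at hj
  rw [Finset.mul_sum]
  rw [show m + 1 - n + 1 - j = (m + 1 - n - j) + 1 by omega, Finset.sum_range_succ']
  have h3 : (if 1 ≤ n + 1 ∧ 1 ≤ 0 then
      c * q ^ (m + 1 + 1 + 1) * trm q a b c d m (n + 1 - 1) j (0 - 1) else 0) = 0 :=
    if_neg (by omega)
  rw [h3, add_zero]
  refine Finset.sum_congr rfl fun l hl => ?_
  rw [if_pos (show 1 ≤ n + 1 ∧ 1 ≤ l + 1 by omega)]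
  simp only [Nat.add_sub_cancel]

lemma SL5 :
    (∑ n ∈ range (m + 3), ∑ j ∈ range (m + 3 - n), ∑ l ∈ range (m + 3 - n - j),
      if 1 ≤ j ∧ n + j + l ≤ m + 1 then -(a * b) * trm q a b c d m n (j - 1) l else 0)
    = -(a * b) * Gs q a b c d m := by
  rw [Gs, Finset.mul_sum]
  rw [show m + 3 = (m + 1) + 1 + 1 from rfl, Finset.sum_range_succ, Finset.sum_range_succ]
  have t2 : ∀ X : ℕ, (∑ j ∈ range X, ∑ l ∈ range (m + 1 + 1 + 1 - (m + 1 + 1) - j),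
      if 1 ≤ j ∧ m + 1 + 1 + j + l ≤ m + 1 then
        -(a * b) * trm q a b c d m (m + 1 + 1) (j - 1) l else 0) = 0 :=
    fun X => Finset.sum_eq_zero fun j _ => Finset.sum_eq_zero fun l _ => if_neg (by omega)
  have t1 : ∀ X : ℕ, (∑ j ∈ range X, ∑ l ∈ range (m + 1 + 1 + 1 - (m + 1) - j),
      if 1 ≤ j ∧ m + 1 + j + l ≤ m + 1 then
        -(a * b) * trm q a b c d m (m + 1) (j - 1) l else 0) = 0 :=
    fun X => Finset.sum_eq_zero fun j _ => Finset.sum_eq_zero fun l _ => if_neg (by omega)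
  rw [t2, t1, add_zero, add_zero]
  refine Finset.sum_congr rfl fun n hn => ?_
  rw [Finset.mem_range] at hn
  rw [Finset.mul_sum]
  rw [show m + 1 + 1 + 1 - n = (m + 1 + 1 - n) + 1 by omega, Finset.sum_range_succ']
  have h0 : (∑ l ∈ range (m + 1 + 1 - n + 1 - 0),
      if 1 ≤ 0 ∧ n + 0 + l ≤ m + 1 then -(a * b) * trm q a b c d m n (0 - 1) l else 0) = 0 :=
    Finset.sum_eq_zero fun l _ => if_neg (by omega)
  rw [h0, add_zero]
  rw [show m + 1 + 1 - n = (m + 1 - n) + 1 by omega, Finset.sum_range_succ]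
  have h1 : (∑ l ∈ range (m + 1 - n + 1 + 1 - (m + 1 - n + 1)),
      if 1 ≤ m + 1 - n + 1 ∧ n + (m + 1 - n + 1) + l ≤ m + 1 then
        -(a * b) * trm q a b c d m n (m + 1 - n + 1 - 1) l else 0) = 0 :=
    Finset.sum_eq_zero fun l _ => if_neg (by omega)
  rw [h1, add_zero]
  refine Finset.sum_congr rfl fun j hj => ?_
  rw [Finset.mem_range] at hj
  rw [Finset.mul_sum]
  rw [Finset.sum_congr rfl fun l _ =>
    if_congr (show (1 ≤ j + 1 ∧ n + (j + 1) + l ≤ m + 1) ↔ l < m + 1 - n - j by omega) rfl rfl]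
  rw [sum_trim _ (by omega)]
  simp only [Nat.add_sub_cancel]

end Sums
lemma Grec {q : ℂ} (hq : ∀ k : ℕ, 1 ≤ k → (1 : ℂ) - q ^ k ≠ 0) (a b c d : ℂ) (m : ℕ) :
    Gs q a b c d (m + 2) = (a + b + d * q ^ (m + 3)) * Gs q a b c d (m + 1)
      + (-(a * b) + c * q ^ (m + 3)) * Gs q a b c d m := by
  have expand : Gs q a b c d (m + 2)
      = (∑ n ∈ range (m + 3), ∑ j ∈ range (m + 3 - n), ∑ l ∈ range (m + 3 - n - j),
          if 1 ≤ j then a * trm q a b c d (m + 1) n (j - 1) l else 0)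
      + (∑ n ∈ range (m + 3), ∑ j ∈ range (m + 3 - n), ∑ l ∈ range (m + 3 - n - j),
          if n + j + l ≤ m + 1 then b * trm q a b c d (m + 1) n j l else 0)
      + (∑ n ∈ range (m + 3), ∑ j ∈ range (m + 3 - n), ∑ l ∈ range (m + 3 - n - j),
          if 1 ≤ n then d * q ^ (m + 3) * trm q a b c d (m + 1) (n - 1) j l else 0)
      + (∑ n ∈ range (m + 3), ∑ j ∈ range (m + 3 - n), ∑ l ∈ range (m + 3 - n - j),
          if 1 ≤ n ∧ 1 ≤ l then c * q ^ (m + 3) * trm q a b c d m (n - 1) j (l - 1) else 0)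
      + (∑ n ∈ range (m + 3), ∑ j ∈ range (m + 3 - n), ∑ l ∈ range (m + 3 - n - j),
          if 1 ≤ j ∧ n + j + l ≤ m + 1 then -(a * b) * trm q a b c d m n (j - 1) l else 0) := by
    rw [Gs]
    rw [show m + 2 + 1 = m + 3 from rfl]
    rw [Finset.sum_congr rfl fun n hn => Finset.sum_congr rfl fun j hj =>
      Finset.sum_congr rfl fun l hl => ?_]
    · simp only [← Finset.sum_add_distrib]
      rfl
    · rw [Finset.mem_range] at hn hj hl
      exact trm_rec a b c d hq m n j l (by omega)
  rw [expand, SL1, SL2, SL3, SL4, SL5]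
  ring

lemma G0 {q : ℂ} (hq : ∀ k : ℕ, 1 ≤ k → (1 : ℂ) - q ^ k ≠ 0) (a b c d : ℂ) :
    Gs q a b c d 0 = 1 := by
  simp [Gs, trm, qbinom_zero hq, qbinom_self hq]

lemma G1 {q : ℂ} (hq : ∀ k : ℕ, 1 ≤ k → (1 : ℂ) - q ^ k ≠ 0) (a b c d : ℂ) :
    Gs q a b c d 1 = a + b + d * q ^ 2 := by
  have z : qbinom q 0 1 = 0 := qbinom_of_lt q (by omega)
  simp [Gs, trm, Finset.sum_range_succ, qbinom_zero hq, qbinom_self hq, z]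
  ring
/-- Explicit formula for the denominator convergents of `H(a,b,c,d,q)`: for `N ≥ 2`,
`B_N = A_N + (cq - ab) Σ_{j,l,n} a^j b^{N-2-n-j-l} c^l d^{n-l} q^{n(n+3)/2+l(l+1)/2}
[n+j, j]_q [N-2-j-l, n]_q [n, l]_q`, summed over `n + j + l ≤ N - 2`. -/
theorem stmt12 (q a b c d : ℂ) (hq : ‖q‖ < 1) (A B : ℕ → ℂ)
    (hA0 : A 0 = 0) (hA1 : A 1 = 1)
    (hArec : ∀ N : ℕ, 1 ≤ N →
      A (N + 1) = (a + b + d * q ^ N) * A N + (-(a * b) + c * q ^ N) * A (N - 1))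
    (hB0 : B 0 = 1) (hB1 : B 1 = 1)
    (hBrec : ∀ N : ℕ, 1 ≤ N →
      B (N + 1) = (a + b + d * q ^ N) * B N + (-(a * b) + c * q ^ N) * B (N - 1)) :
    ∀ N : ℕ, 2 ≤ N →
      B N = A N + (c * q - a * b) *
        ∑ n ∈ range (N - 1), ∑ j ∈ range (N - 1 - n), ∑ l ∈ range (N - 1 - n - j),
          a ^ j * b ^ (N - 2 - n - j - l) * c ^ l * d ^ (n - l) *
            q ^ (n * (n + 3) / 2 + l * (l + 1) / 2) *
            qbinom q (n + j) j * qbinom q (N - 2 - j - l) n * qbinom q n l := by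
  have hq' : ∀ k : ℕ, 1 ≤ k → (1 : ℂ) - q ^ k ≠ 0 := by
    intro k hk h0
    have h1 : q ^ k = 1 := by linear_combination -h0
    have h2 : ‖q‖ ^ k < 1 := pow_lt_one₀ (norm_nonneg q) hq (by omega)
    rw [← norm_pow, h1, norm_one] at h2
    exact lt_irrefl 1 h2
  have key : ∀ k : ℕ, B (k + 2) = A (k + 2) + (c * q - a * b) * Gs q a b c d k ∧
      B (k + 3) = A (k + 3) + (c * q - a * b) * Gs q a b c d (k + 1) := by
    intro k
    induction k with
    | zero =>
      have hb1 := hBrec 1 (by omega)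
      have ha1 := hArec 1 (by omega)
      have hb2 := hBrec 2 (by omega)
      have ha2 := hArec 2 (by omega)
      norm_num at hb1 ha1 hb2 ha2
      constructor
      · show B 2 = A 2 + (c * q - a * b) * Gs q a b c d 0
        rw [G0 hq', hb1, ha1, hB0, hB1, hA0, hA1]
        ring
      · show B 3 = A 3 + (c * q - a * b) * Gs q a b c d 1
        rw [G1 hq', hb2, ha2, hb1, ha1, hB0, hB1, hA0, hA1]
        ring
    | succ k ih =>
      obtain ⟨ih1, ih2⟩ := ih
      refine ⟨ih2, ?_⟩
      have hb := hBrec (k + 3) (by omega)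
      have ha := hArec (k + 3) (by omega)
      have hg := Grec hq' a b c d k
      rw [show k + 3 - 1 = k + 2 from rfl] at hb ha
      rw [show k + 1 + 3 = k + 3 + 1 from rfl, show k + 1 + 1 = k + 2 from rfl, hb, ha]
      linear_combination (a + b + d * q ^ (k + 3)) * ih2 + (-(a * b) + c * q ^ (k + 3)) * ih1
        - (c * q - a * b) * hg
  intro N hN
  obtain ⟨k, rfl⟩ : ∃ k, N = k + 2 := ⟨N - 2, by omega⟩
  rw [(key k).1]
  congr 2
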